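/- Let p > 3 be a prime and d an integer with 0 ≤ d < p-2. Then ∑_{k=0}^{p-1} (-1)^k T(k,d) = (-1)^{d-1}·d + ∑_{k=d+1}^{⌊(p+d-1)/2⌋} C(p,k)·C(p-k-2, p+d-1-2k), an exact identity in ℤ. -/

import Mathlib

open Polynomial Finset

/-- The trinomial coefficient `T n m`: the coefficient of `x^(n+m)` in `(1+x+x^2)^n`. -/
noncomputable def trinomial (n m : ℕ) : ℤ :=
  Polynomial.coeff ((1 + Polynomial.X + Polynomial.X ^ 2 : Polynomial ℤ) ^ n) (n + m)

private lemma g_mul (m : ℕ) :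
    (X + 1 : ℤ[X]) ^ 2 * (∑ j ∈ range m, C ((-1 : ℤ) ^ j * (j + 1)) * X ^ j) =
      1 - C ((-1 : ℤ) ^ m * (m + 1)) * X ^ m - C ((-1 : ℤ) ^ m * m) * X ^ (m + 1) := by
  induction m with
  | zero => simp
  | succ m ih =>
    rw [Finset.sum_range_succ, mul_add, ih]
    simp only [map_mul, map_add, map_pow, map_one, map_neg, map_natCast, Nat.cast_add,
      Nat.cast_one, pow_succ]
    ring

theorem stmt15 (p : ℕ) (hp : p.Prime) (hp3 : 3 < p) (d : ℕ) (hd : d < p - 2) :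
    ∑ k ∈ Finset.range p, (-1 : ℤ) ^ k * trinomial k d =
      (-1 : ℤ) ^ (d + 1) * d +
        ∑ k ∈ Finset.Icc (d + 1) ((p + d - 1) / 2),
          (Nat.choose p k : ℤ) * Nat.choose (p - k - 2) (p + d - 1 - 2 * k) := by
  have hodd : Odd p := hp.odd_of_ne_two (by omega)
  obtain ⟨q, rfl⟩ : ∃ q, p = q + 4 := ⟨p - 4, by omega⟩
  have hdq : d < q + 2 := by omega
  set u : ℤ[X] := 1 + X + X ^ 2 with hu
  set S : ℤ[X] := ∑ k ∈ range (q + 4), (-u) ^ k * X ^ (q + 3 - k) with hS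
  set P : ℤ[X] := ∑ k ∈ range (q + 3),
      (X : ℤ[X]) ^ (2 * k) * (X + 1) ^ (q + 2 - k) * ((q + 4).choose k : ℤ[X]) with hP
  set G : ℤ[X] := ∑ j ∈ range (q + 3), C ((-1 : ℤ) ^ j * (j + 1)) * X ^ j with hG
  set Q : ℤ[X] := G * X ^ (q + 4) with hQ
  -- Claim A : geometric sum
  have hA : (X + 1 : ℤ[X]) ^ 2 * S = X ^ (q + 4) + u ^ (q + 4) := by
    have h1 := geom_sum₂_mul (-u) (X : ℤ[X]) (q + 4)
    have h2 : (-u) ^ (q + 4) = -u ^ (q + 4) := hodd.neg_pow u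
    rw [h2] at h1
    have h3 : (-u - X : ℤ[X]) = -((X + 1) ^ 2) := by rw [hu]; ring
    rw [h3] at h1
    have : ∀ i ∈ range (q + 4), ((-u) ^ i * (X : ℤ[X]) ^ (q + 4 - 1 - i)) =
        (-u) ^ i * X ^ (q + 3 - i) := by
      intro i hi
      congr 2
    rw [Finset.sum_congr rfl this] at h1
    linear_combination -h1
  -- Claim B : binomial expansion of u^p
  have hB : u ^ (q + 4) = (X + 1 : ℤ[X]) ^ 2 * P
      + ((q + 4 : ℕ) : ℤ[X]) * X ^ (2 * q + 6) * (X + 1) + X ^ (2 * q + 8) := by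
    have h1 : u = X ^ 2 + (X + 1) := by rw [hu]; ring
    rw [h1, add_pow]
    rw [show q + 4 + 1 = (q + 3) + 1 + 1 by ring, Finset.sum_range_succ, Finset.sum_range_succ]
    have h2 : ∀ k ∈ range (q + 3), ((X : ℤ[X]) ^ 2) ^ k * (X + 1) ^ (q + 4 - k) *
        ((q + 4).choose k : ℤ[X]) =
        (X + 1) ^ 2 * (X ^ (2 * k) * (X + 1) ^ (q + 2 - k) * ((q + 4).choose k : ℤ[X])) := by
      intro k hk
      simp only [Finset.mem_range] at hk
      rw [show q + 4 - k = (q + 2 - k) + 2 by omega, pow_add, ← pow_mul]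
      ring
    rw [Finset.sum_congr rfl h2, ← Finset.mul_sum, ← hP]
    have h3 : (q + 4).choose (q + 3) = q + 4 := by
      rw [show q + 4 = (q + 3) + 1 by ring, Nat.choose_succ_self_right]
    have h4 : (q + 4).choose (q + 4) = 1 := Nat.choose_self _
    rw [h3, h4, show q + 4 - (q + 3) = 1 by omega, show q + 4 - (q + 4) = 0 by omega]
    push_cast
    ring
  -- Claim C
  have hC : (X + 1 : ℤ[X]) ^ 2 * Q = X ^ (q + 4)
      - ((q + 4 : ℕ) : ℤ[X]) * X ^ (2 * q + 7) - ((q + 3 : ℕ) : ℤ[X]) * X ^ (2 * q + 8) := by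
    have heven : Even (q + 3) := by
      rcases hodd with ⟨t, ht⟩
      exact ⟨t, by omega⟩
    have h1 := g_mul (q + 3)
    rw [heven.neg_one_pow] at h1
    rw [hQ, ← mul_assoc, h1]
    simp only [one_mul, map_add, map_natCast, map_one]
    push_cast
    ring
  -- cancel (X+1)^2
  have hw : (X + 1 : ℤ[X]) ≠ 0 := by
    intro h
    have := congrArg (fun f => Polynomial.coeff f 0) h
    simp at this
  have hD : S = P + Q + ((q + 4 : ℕ) : ℤ[X]) * X ^ (2 * q + 6) := by
    apply mul_left_cancel₀ (pow_ne_zero 2 hw)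
    rw [hA, hB]
    push_cast at hC ⊢
    linear_combination -hC
  -- extract coefficient at q + 3 + d
  have hcoeff := congrArg (fun f => Polynomial.coeff f (q + 3 + d)) hD
  simp only [Polynomial.coeff_add] at hcoeff
  -- coefficient of S
  have hcS : S.coeff (q + 3 + d) = ∑ k ∈ range (q + 4), (-1 : ℤ) ^ k * _root_.trinomial k d := by
    rw [hS, Polynomial.finset_sum_coeff]
    refine Finset.sum_congr rfl fun k hk => ?_
    simp only [Finset.mem_range] at hk
    rw [Polynomial.coeff_mul_X_pow', if_pos (by omega), show q + 3 + d - (q + 3 - k) = k + d by omega]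
    rw [neg_pow, show ((-1 : ℤ[X]) ^ k) = C ((-1 : ℤ) ^ k) by simp, Polynomial.coeff_C_mul]
    rfl
  -- coefficient of P
  have hcP : P.coeff (q + 3 + d) = ∑ k ∈ Finset.Icc (d + 1) ((q + 4 + d - 1) / 2),
      ((q + 4).choose k : ℤ) * ((q + 4 - k - 2).choose (q + 4 + d - 1 - 2 * k) : ℤ) := by
    rw [hP, Polynomial.finset_sum_coeff]
    have hterm : ∀ k, ((X : ℤ[X]) ^ (2 * k) * (X + 1) ^ (q + 2 - k) *
        ((q + 4).choose k : ℤ[X])).coeff (q + 3 + d) =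
        if 2 * k ≤ q + 3 + d then
          ((q + 4).choose k : ℤ) * ((q + 2 - k).choose (q + 3 + d - 2 * k) : ℤ) else 0 := by
      intro k
      rw [show (X : ℤ[X]) ^ (2 * k) * (X + 1) ^ (q + 2 - k) * ((q + 4).choose k : ℤ[X]) =
        (((q + 4).choose k : ℤ[X]) * (X + 1) ^ (q + 2 - k)) * X ^ (2 * k) by ring]
      rw [Polynomial.coeff_mul_X_pow']
      split
      · rw [Polynomial.coeff_natCast_mul, Polynomial.coeff_X_add_one_pow]
      · rfl
    rw [Finset.sum_congr rfl fun k _ => hterm k]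
    rw [← Finset.sum_subset (h := ?_) (hf := ?_)]
    · refine Finset.sum_congr rfl fun k hk => ?_
      simp only [Finset.mem_Icc] at hk
      rw [if_pos (by omega), show q + 4 - k - 2 = q + 2 - k from by omega,
        show q + 4 + d - 1 - 2 * k = q + 3 + d - 2 * k from by omega]
    · intro k hk
      simp only [Finset.mem_Icc] at hk
      simp only [Finset.mem_range]
      omega
    · intro k hk hk2
      simp only [Finset.mem_Icc, Finset.mem_range] at hk hk2
      split
      · have : q + 2 - k < q + 3 + d - 2 * k := by omega
        rw [Nat.choose_eq_zero_of_lt this]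
        simp
      · rfl
  -- coefficient of Q
  have hcQ : Q.coeff (q + 3 + d) = (-1 : ℤ) ^ (d + 1) * d := by
    rw [hQ, Polynomial.coeff_mul_X_pow']
    rcases Nat.eq_zero_or_pos d with hd0 | hd0
    · subst hd0
      rw [if_neg (by omega)]
      simp
    · rw [if_pos (by omega), hG, Polynomial.finset_sum_coeff]
      have : ∀ j ∈ range (q + 3), (C ((-1 : ℤ) ^ j * (j + 1)) * X ^ j).coeff (q + 3 + d - (q + 4))
          = if q + 3 + d - (q + 4) = j then (-1 : ℤ) ^ j * (j + 1) else 0 := by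
        intro j hj
        rw [Polynomial.coeff_C_mul, Polynomial.coeff_X_pow]
        split <;> simp
      rw [Finset.sum_congr rfl this, Finset.sum_ite_eq (range (q + 3)) _
        (fun j => (-1 : ℤ) ^ j * (j + 1))]
      rw [if_pos (by simp only [Finset.mem_range]; omega)]
      rw [show q + 3 + d - (q + 4) = d - 1 by omega]
      rw [show d + 1 = (d - 1) + 2 by omega, pow_add]
      rw [show ((d - 1 : ℕ) : ℤ) = (d : ℤ) - 1 by omega]
      push_cast
      ring
  -- coefficient of the remainder
  have hcR : (((q + 4 : ℕ) : ℤ[X]) * X ^ (2 * q + 6)).coeff (q + 3 + d) = 0 := by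
    rw [Polynomial.coeff_natCast_mul, Polynomial.coeff_X_pow, if_neg (by omega)]
    ring
  rw [hcS, hcP, hcQ, hcR] at hcoeff
  rw [hcoeff]
  ring
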